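/- (Nondegeneracy of zonal spherical harmonics.) Let ℓ ≥ 1 be a natural number and let P be a nonzero real polynomial satisfying the Legendre differential equation (1 − x²)·P''(x) − 2x·P'(x) + ℓ(ℓ+1)·P(x) = 0 for all x ∈ ℝ. Define K : [0,π] → ℝ by K(θ) = P(cos θ). Then K is non-degenerate in the sense that at every critical point θ₀ ∈ [0,π] of K (including the poles θ₀ = 0 and θ₀ = π, where K'(θ₀) = 0 automatically), one has K''(θ₀) ≠ 0. -/

import Mathlib

open Real Set Polynomial

private lemma legendre_iter (lam : ℝ) (P : ℝ[X])
    (h : (1 - X ^ 2) * derivative (derivative P) - 2 * X * derivative P + C lam * P = 0) :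
    ∀ n : ℕ, (1 - X ^ 2) * derivative^[n + 2] P
        - 2 * ((n : ℝ[X]) + 1) * X * derivative^[n + 1] P
        + (C lam - (n : ℝ[X]) * ((n : ℝ[X]) + 1)) * derivative^[n] P = 0 := by
  intro n
  induction n with
  | zero =>
      simp only [Nat.cast_zero, zero_add, Function.iterate_succ_apply', Function.iterate_zero,
        Function.iterate_one, id_eq]
      linear_combination h
  | succ n ih =>
      have h2 := congrArg derivative ih
      rw [derivative_zero] at h2
      simp only [derivative_add, derivative_sub, derivative_mul, derivative_one,
        derivative_X, derivative_X_pow, derivative_C, derivative_natCast, derivative_ofNat,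
        Nat.cast_one, Nat.succ_eq_add_one, pow_one, C_eq_natCast, Nat.cast_ofNat, map_ofNat,
        ← Function.iterate_succ_apply' derivative] at h2
      have e1 : derivative^[n + 1 + 2] P = derivative^[n + 2 + 1] P := by ring_nf
      have e2 : (((n : ℕ) + 1 : ℕ) : ℝ[X]) = (n : ℝ[X]) + 1 := by push_cast; ring
      rw [e1, e2]
      linear_combination h2

private lemma poly_eq_zero_of_iter (P : ℝ[X]) (x : ℝ)
    (h : ∀ n, (derivative^[n] P).eval x = 0) : P = 0 := by
  apply taylor_injective x
  rw [map_zero]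
  ext n
  rw [taylor_coeff, coeff_zero]
  have h1 := congrFun (factorial_smul_hasseDeriv (R := ℝ) n) P
  have h2 := congrArg (eval x) h1
  rw [h n] at h2
  simp only [Module.End.mul_apply, Module.End.natCast_apply, LinearMap.smul_apply, eval_smul, smul_eq_mul, nsmul_eq_mul, eval_mul, eval_natCast] at h2
  have hne : (n.factorial : ℝ) ≠ 0 := by exact_mod_cast n.factorial_ne_zero
  rcases mul_eq_zero.mp h2 with h3 | h3
  · exact absurd h3 hne
  · exact h3

private lemma interior_zero (lam : ℝ) (P : ℝ[X])
    (hI : ∀ n : ℕ, (1 - X ^ 2) * derivative^[n + 2] P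
        - 2 * ((n : ℝ[X]) + 1) * X * derivative^[n + 1] P
        + (C lam - (n : ℝ[X]) * ((n : ℝ[X]) + 1)) * derivative^[n] P = 0)
    (x : ℝ) (hx : 1 - x ^ 2 ≠ 0) (h0 : P.eval x = 0)
    (h1 : (derivative P).eval x = 0) : P = 0 := by
  apply poly_eq_zero_of_iter P x
  have key : ∀ n, (derivative^[n] P).eval x = 0 ∧ (derivative^[n + 1] P).eval x = 0 := by
    intro n
    induction n with
    | zero => exact ⟨by simpa using h0, by simpa using h1⟩
    | succ n ih =>
      refine ⟨ih.2, ?_⟩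
      have h2 := congrArg (eval x) (hI n)
      rw [show n + 1 + 1 = n + 2 from rfl]
      simp only [eval_add, eval_sub, eval_mul, eval_one, eval_pow, eval_X, eval_C,
        eval_natCast, eval_ofNat, eval_zero, ih.1, ih.2, mul_zero, zero_mul,
        sub_zero, add_zero] at h2
      exact (mul_eq_zero.mp h2).resolve_left hx
  exact fun n => (key n).1

private lemma boundary_zero (lam : ℝ) (P : ℝ[X])
    (hI : ∀ n : ℕ, (1 - X ^ 2) * derivative^[n + 2] P
        - 2 * ((n : ℝ[X]) + 1) * X * derivative^[n + 1] P
        + (C lam - (n : ℝ[X]) * ((n : ℝ[X]) + 1)) * derivative^[n] P = 0)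
    (x : ℝ) (hx : x ^ 2 = 1) (h0 : P.eval x = 0) : P = 0 := by
  apply poly_eq_zero_of_iter P x
  intro n
  induction n with
  | zero => simpa using h0
  | succ n ih =>
    have h2 := congrArg (eval x) (hI n)
    simp only [eval_add, eval_sub, eval_mul, eval_one, eval_pow, eval_X, eval_C,
      eval_natCast, eval_ofNat, eval_zero, ih, mul_zero, zero_mul, hx,
      sub_self, sub_zero, add_zero, zero_sub, neg_eq_zero] at h2
    have hx0 : x ≠ 0 := by
      intro h; rw [h] at hx; norm_num at hx
    have hn1 : ((n : ℝ) + 1) ≠ 0 := by positivity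
    rcases mul_eq_zero.mp h2 with h3 | h3
    · rcases mul_eq_zero.mp h3 with h4 | h4
      · rcases mul_eq_zero.mp h4 with h5 | h5
        · norm_num at h5
        · exact absurd h5 hn1
      · exact absurd h4 hx0
    · exact h3

theorem zonal_spherical_harmonic_nondegenerate
    (ℓ : ℕ) (hℓ : 1 ≤ ℓ) (P : Polynomial ℝ) (hP0 : P ≠ 0)
    (hP : ∀ x : ℝ, (1 - x ^ 2) * (P.derivative.derivative.eval x)
        - 2 * x * (P.derivative.eval x) + (ℓ * (ℓ + 1) : ℝ) * P.eval x = 0) :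
    ∀ θ₀ ∈ Icc (0 : ℝ) π,
      deriv (fun t : ℝ => P.eval (Real.cos t)) θ₀ = 0 →
      deriv (deriv (fun t : ℝ => P.eval (Real.cos t))) θ₀ ≠ 0 := by
  intro θ₀ hθ hcrit
  set lam : ℝ := (ℓ : ℝ) * ((ℓ : ℝ) + 1) with hlamdef
  have hlam : 0 < lam := by
    have : (1 : ℝ) ≤ (ℓ : ℝ) := by exact_mod_cast hℓ
    nlinarith
  -- base polynomial identity
  have hbase : (1 - X ^ 2) * derivative (derivative P) - 2 * X * derivative P
      + C lam * P = 0 := by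
    apply Polynomial.funext
    intro r
    have := hP r
    simp only [eval_add, eval_sub, eval_mul, eval_one, eval_pow, eval_X, eval_C,
      eval_ofNat, eval_zero]
    linarith [hP r]
  have hI := legendre_iter lam P hbase
  -- first derivative
  have hf1 : ∀ t : ℝ, HasDerivAt (fun t : ℝ => P.eval (Real.cos t))
      (-Real.sin t * (derivative P).eval (Real.cos t)) t := by
    intro t
    have := (P.hasDerivAt (Real.cos t)).comp t (Real.hasDerivAt_cos t)
    simpa [mul_comm, Function.comp_def] using this
  have hd1 : deriv (fun t : ℝ => P.eval (Real.cos t))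
      = fun t => -Real.sin t * (derivative P).eval (Real.cos t) :=
    funext fun t => (hf1 t).deriv
  -- second derivative at θ₀
  have hg : HasDerivAt (fun t : ℝ => -Real.sin t * (derivative P).eval (Real.cos t))
      (-Real.cos θ₀ * (derivative P).eval (Real.cos θ₀)
        + (Real.sin θ₀) ^ 2 * (derivative (derivative P)).eval (Real.cos θ₀)) θ₀ := by
    have h1 : HasDerivAt (fun t : ℝ => -Real.sin t) (-Real.cos θ₀) θ₀ :=
      (Real.hasDerivAt_sin θ₀).neg
    have h2 : HasDerivAt (fun t : ℝ => (derivative P).eval (Real.cos t))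
        (-Real.sin θ₀ * (derivative (derivative P)).eval (Real.cos θ₀)) θ₀ := by
      have := ((derivative P).hasDerivAt (Real.cos θ₀)).comp θ₀ (Real.hasDerivAt_cos θ₀)
      simpa [mul_comm, Function.comp_def] using this
    have := h1.mul h2
    exact this.congr_deriv (by ring)
  rw [hd1] at hcrit ⊢
  rw [hg.deriv]
  intro hzero
  set x₀ := Real.cos θ₀ with hx₀
  have hsc : Real.sin θ₀ ^ 2 = 1 - x₀ ^ 2 := by
    have := Real.sin_sq_add_cos_sq θ₀
    rw [hx₀]; linarith
  by_cases hs : Real.sin θ₀ = 0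
  · -- boundary case : x₀² = 1
    have hx1 : x₀ ^ 2 = 1 := by
      have h' : Real.sin θ₀ ^ 2 = 0 := by rw [hs]; ring
      linarith [hsc]
    have hx0 : x₀ ≠ 0 := by intro h; rw [h] at hx1; norm_num at hx1
    have hP'0 : (derivative P).eval x₀ = 0 := by
      rw [hs] at hzero
      norm_num at hzero
      rcases hzero with h | h
      · exact absurd h hx0
      · exact h
    have hPP0 : P.eval x₀ = 0 := by
      have := hP x₀
      rw [hP'0] at this
      have h1 : 1 - x₀ ^ 2 = 0 := by rw [hx1]; ring
      rw [h1] at this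
      have : lam * P.eval x₀ = 0 := by linear_combination this
      exact (mul_eq_zero.mp this).resolve_left (ne_of_gt hlam)
    exact hP0 (boundary_zero lam P hI x₀ hx1 hPP0)
  · -- interior case
    have hP'0 : (derivative P).eval x₀ = 0 := by
      rcases mul_eq_zero.mp hcrit with h | h
      · exact absurd (neg_eq_zero.mp h) hs
      · exact h
    have hP''0 : (derivative (derivative P)).eval x₀ = 0 := by
      rw [hP'0, mul_zero, zero_add] at hzero
      rcases mul_eq_zero.mp hzero with h | h
      · exact absurd ((pow_eq_zero_iff two_ne_zero).mp h) hs
      · exact h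
    have hPP0 : P.eval x₀ = 0 := by
      have := hP x₀
      rw [hP'0, hP''0] at this
      have : lam * P.eval x₀ = 0 := by linear_combination this
      exact (mul_eq_zero.mp this).resolve_left (ne_of_gt hlam)
    have hxne : 1 - x₀ ^ 2 ≠ 0 := by
      rw [← hsc]
      exact pow_ne_zero 2 hs
    exact hP0 (interior_zero lam P hI x₀ hxne hPP0 hP'0)
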